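/- arXiv:1907.11590 — 2 statements merged into one kernel-verified Lean document; each statement's English description precedes it below -/
import Mathlib

section
/- Let G be a finite connected simple graph with minimum degree δ(G) = 2, satisfying γ_t(G) = 2μ*(G), that is not isomorphic to any graph in K nor to C_6. Then the edge set M(G) — defined as the set of edges uv for which there exist x ∈ N(u) of degree two and y ∈ N(v) of degree two such that the edges xu, uv, vy lie on a common induced 6-cycle of G — is a maximal matching of G, it satisfies: (i) for every vertex v covered by M(G), its partner is the unique neighbor of v among the covered vertices; (ii) for every two distinct covered vertices u, v sharing a common neighbor, there exists a vertex whose neighborhood is exactly the pair of their partners; and moreover M(G) is the unique maximal matching of G satisfying (i) and (ii). -/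
open SimpleGraph

namespace TotalDomMM

variable {V : Type*}

/-- `M` is a maximal matching of `G`: a matching not contained in a larger matching. -/
def IsMaximalMatching (G : SimpleGraph V) (M : G.Subgraph) : Prop :=
  M.IsMatching ∧
    ∀ M' : G.Subgraph, M'.IsMatching → M.edgeSet ⊆ M'.edgeSet → M.edgeSet = M'.edgeSet

/-- `μ*(G)`: the minimum cardinality of a maximal matching of `G`. -/
noncomputable def muStar (G : SimpleGraph V) : ℕ :=
  sInf {n | ∃ M : G.Subgraph, IsMaximalMatching G M ∧ M.edgeSet.ncard = n}

/-- `S` is a total dominating set of `G`: every vertex has a neighbor in `S`. -/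
def IsTotalDomSet (G : SimpleGraph V) (S : Set V) : Prop :=
  ∀ v : V, ∃ u ∈ S, G.Adj v u

/-- `γ_t(G)`: the minimum cardinality of a total dominating set of `G`. -/
noncomputable def gammaT (G : SimpleGraph V) : ℕ :=
  sInf {n | ∃ S : Set V, IsTotalDomSet G S ∧ S.ncard = n}

/-- `δ(G)`: the minimum degree of `G`. -/
noncomputable def minDeg (G : SimpleGraph V) : ℕ :=
  sInf {k | ∃ v : V, (G.neighborSet v).ncard = k}

/-- `G` has no isolated vertices. -/
def NoIsolated (G : SimpleGraph V) : Prop := ∀ v : V, ∃ u : V, G.Adj v u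

/-- `sup(G)`: the set of support vertices, i.e. vertices adjacent to a leaf
(a vertex of degree one). -/
def supSet (G : SimpleGraph V) : Set V :=
  {v | ∃ u, G.Adj v u ∧ (G.neighborSet u).ncard = 1}

/-- `S⁺(G)`: support vertices adjacent to some support vertex. -/
def supPlus (G : SimpleGraph V) : Set V :=
  {v ∈ supSet G | ∃ u ∈ supSet G, G.Adj v u}

/-- `S⁻(G) = sup(G) \ S⁺(G)`. -/
def supMinus (G : SimpleGraph V) : Set V := supSet G \ supPlus G

/-- The set of vertices covered by a set of edges. -/
def edgeVerts (E : Set (Sym2 V)) : Set V := {v | ∃ e ∈ E, v ∈ e}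

/-- Conditions (i)-(ii) (minimum degree two case) for a matching `M`:
(i) for every `v ∈ V(M)`, its partner `M_p v` is the unique neighbor of `v` in `V(M)`;
(ii) distinct `u, v ∈ V(M)` with a common neighbor force a vertex whose neighborhood is
exactly `{M_p u, M_p v}`. -/
def MatchingCond (G : SimpleGraph V) (M : G.Subgraph) : Prop :=
  (∀ v ∈ M.verts, ∀ w, M.Adj v w → ∀ u ∈ M.verts, G.Adj v u → u = w) ∧
  (∀ u v : V, u ∈ M.verts → v ∈ M.verts → u ≠ v →
    (∃ w, G.Adj u w ∧ G.Adj v w) →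
    ∀ u' v' : V, M.Adj u u' → M.Adj v v' → ∃ x : V, G.neighborSet x = {u', v'})

/-- The matching `M` is partitioned as `M = M⁺ ∪ M⁻ ∪ M*` satisfying conditions (i)-(iv)
of the main theorem:
(i) `M⁺` is a perfect matching of the subgraph induced by `S⁺(G)`;
(ii) `S⁻(G) ⊆ V(M⁻)` and every edge of `M⁻` joins a vertex of `S⁻(G)` with a vertex of
`V(G) \ sup(G)`;
(iii) for `v ∈ S⁻(G) ∪ V(M*)`, the partner `M_p v` is the unique neighbor of `v` in `V(M)`;
(iv) for distinct `u, v ∈ S⁻(G) ∪ V(M*)` with a common neighbor, some vertex has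
neighborhood exactly `{M_p u, M_p v}`. -/
def PartitionCond (G : SimpleGraph V) (M : G.Subgraph) (Mp Mm Ms : Set (Sym2 V)) : Prop :=
  Mp ∪ Mm ∪ Ms = M.edgeSet ∧
  Disjoint Mp Mm ∧ Disjoint Mp Ms ∧ Disjoint Mm Ms ∧
  -- (i)
  (∀ u v : V, s(u, v) ∈ Mp → u ∈ supPlus G) ∧
  supPlus G ⊆ edgeVerts Mp ∧
  -- (ii)
  supMinus G ⊆ edgeVerts Mm ∧
  (∀ u v : V, s(u, v) ∈ Mm →
    (u ∈ supMinus G ∧ v ∉ supSet G) ∨ (v ∈ supMinus G ∧ u ∉ supSet G)) ∧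
  -- (iii)
  (∀ v ∈ supMinus G ∪ edgeVerts Ms, ∀ w, M.Adj v w → ∀ u ∈ M.verts, G.Adj v u → u = w) ∧
  -- (iv)
  (∀ u v : V, u ∈ supMinus G ∪ edgeVerts Ms → v ∈ supMinus G ∪ edgeVerts Ms → u ≠ v →
    (∃ w, G.Adj u w ∧ G.Adj v w) →
    ∀ u' v' : V, M.Adj u u' → M.Adj v v' → ∃ x : V, G.neighborSet x = {u', v'})

/-- The graph with vertices `u, v, w_1, …, w_n` (here `u = Sum.inr 0`, `v = Sum.inr 1`,
`w_i = Sum.inl i`) and edges `uv` and `uw_i, vw_i` for all `i`: `n` triangles sharing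
the common edge `uv`. -/
def kGraph (n : ℕ) : SimpleGraph (Fin n ⊕ Fin 2) :=
  SimpleGraph.fromRel (fun a b => ¬(a.isLeft = true ∧ b.isLeft = true))

/-- `G` belongs to the family `𝒦` of graphs consisting of triangles sharing a common edge. -/
def InK (G : SimpleGraph V) : Prop := ∃ n : ℕ, 1 ≤ n ∧ Nonempty (G ≃g kGraph n)

/-- `G` is a 6-cycle. -/
def IsC6 (G : SimpleGraph V) : Prop := Nonempty (G ≃g SimpleGraph.cycleGraph 6)

/-- `a, b, c, d, e, f` (in this cyclic order) form an induced 6-cycle in `G`. -/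
def IsInducedC6 (G : SimpleGraph V) (a b c d e f : V) : Prop :=
  List.Pairwise (· ≠ ·) [a, b, c, d, e, f] ∧
  G.Adj a b ∧ G.Adj b c ∧ G.Adj c d ∧ G.Adj d e ∧ G.Adj e f ∧ G.Adj f a ∧
  ¬G.Adj a c ∧ ¬G.Adj a d ∧ ¬G.Adj a e ∧
  ¬G.Adj b d ∧ ¬G.Adj b e ∧ ¬G.Adj b f ∧
  ¬G.Adj c e ∧ ¬G.Adj c f ∧ ¬G.Adj d f

/-- `d₂(G)`: the set of vertices of degree two. -/
def d2 (G : SimpleGraph V) : Set V := {v | (G.neighborSet v).ncard = 2}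

/-- `𝓜(G)`: the set of edges `uv` such that there are `x ∈ N(u) ∩ d₂(G)` and
`y ∈ N(v) ∩ d₂(G)` so that the edges `xu, uv, vy` lie on a common induced 6-cycle of `G`. -/
def mSet (G : SimpleGraph V) : Set (Sym2 V) :=
  {e | ∃ u v x y w t : V, e = s(u, v) ∧
    x ∈ G.neighborSet u ∩ d2 G ∧ y ∈ G.neighborSet v ∩ d2 G ∧
    IsInducedC6 G x u v y w t}

section Basic

variable [Fintype V] {G : SimpleGraph V}

lemma deg_ge (h2 : minDeg G = 2) (p : V) : 2 ≤ (G.neighborSet p).ncard :=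
  h2 ▸ Nat.sInf_le ⟨p, rfl⟩

lemma exists_maximal_matching (G : SimpleGraph V) : ∃ M : G.Subgraph, IsMaximalMatching G M := by
  classical
  set T : Set ℕ := {n | ∃ M : G.Subgraph, M.IsMatching ∧ M.edgeSet.ncard = n} with hT
  have hne : 0 ∈ T := ⟨⊥, fun v hv => absurd hv (by simp), by simp⟩
  have hbdd : BddAbove T := by
    refine ⟨(Set.univ : Set (Sym2 V)).ncard, fun n hn => ?_⟩
    obtain ⟨M, _, rfl⟩ := hn
    exact Set.ncard_le_ncard (Set.subset_univ _) (Set.toFinite _)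
  obtain ⟨M, hM, hcard⟩ := Nat.sSup_mem ⟨0, hne⟩ hbdd
  refine ⟨M, hM, fun M' hM' hsub => ?_⟩
  refine Set.eq_of_subset_of_ncard_le hsub ?_ (Set.toFinite _)
  rw [hcard]
  exact le_csSup hbdd ⟨M', hM', rfl⟩

lemma exists_min_maximal (G : SimpleGraph V) :
    ∃ M : G.Subgraph, IsMaximalMatching G M ∧ M.edgeSet.ncard = muStar G := by
  obtain ⟨M, hM⟩ := exists_maximal_matching G
  have hne : {n | ∃ M : G.Subgraph, IsMaximalMatching G M ∧ M.edgeSet.ncard = n}.Nonempty :=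
    ⟨M.edgeSet.ncard, M, hM, rfl⟩
  exact Nat.sInf_mem hne

lemma touch {M : G.Subgraph} (hmax : IsMaximalMatching G M) {a b : V} (hab : G.Adj a b) :
    a ∈ M.verts ∨ b ∈ M.verts := by
  by_contra h
  push_neg at h
  obtain ⟨ha, hb⟩ := h
  have hd : Disjoint M.support (G.subgraphOfAdj hab).support := by
    rw [hmax.1.support_eq_verts, (Subgraph.IsMatching.subgraphOfAdj hab).support_eq_verts]
    simp only [subgraphOfAdj_verts]
    rw [Set.disjoint_right]
    rintro x (rfl | rfl) <;> assumption
  have hM' : (M ⊔ G.subgraphOfAdj hab).IsMatching := hmax.1.sup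
    (Subgraph.IsMatching.subgraphOfAdj hab) hd
  have heq := hmax.2 _ hM' (by rw [Subgraph.edgeSet_sup]; exact Set.subset_union_left)
  have : s(a, b) ∈ M.edgeSet := by
    rw [heq, Subgraph.edgeSet_sup]; simp
  exact ha (M.edge_vert (Subgraph.mem_edgeSet.mp this))

lemma uncovered_nbrs {M : G.Subgraph} (hmax : IsMaximalMatching G M) {p : V}
    (hp : p ∉ M.verts) : G.neighborSet p ⊆ M.verts := by
  intro q hq
  exact (touch hmax hq).resolve_left hp

lemma matching_verts_ncard {M : G.Subgraph} (hM : M.IsMatching) :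
    M.verts.ncard = 2 * M.edgeSet.ncard := by
  classical
  have adj_of_mem : ∀ e ∈ M.edgeSet, M.Adj e.out.1 e.out.2 := by
    intro e he
    rw [Subgraph.mem_edgeSet.symm, Sym2.mk, e.out_eq]
    exact he
  have mem_endpoints : ∀ (e : Sym2 V) (a : V), a ∈ e ↔ a = e.out.1 ∨ a = e.out.2 := by
    intro e a
    conv_lhs => rw [← e.out_eq]
    exact Sym2.mem_iff
  have h1 : M.verts.toFinset =
      M.edgeSet.toFinset.biUnion (fun e => {e.out.1, e.out.2}) := by
    ext a
    simp only [Set.mem_toFinset, Finset.mem_biUnion, Finset.mem_insert, Finset.mem_singleton]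
    constructor
    · intro ha
      obtain ⟨b, hb, -⟩ := hM ha
      refine ⟨s(a, b), by rwa [Subgraph.mem_edgeSet], ?_⟩
      rw [← mem_endpoints]
      exact Sym2.mem_mk_left a b
    · rintro ⟨e, he, hae⟩
      rcases hae with rfl | rfl
      · exact M.edge_vert (adj_of_mem e he)
      · exact M.edge_vert (adj_of_mem e he).symm
  have h2 : ∀ e ∈ M.edgeSet.toFinset, ({e.out.1, e.out.2} : Finset V).card = 2 := by
    intro e he
    rw [Set.mem_toFinset] at he
    rw [Finset.card_insert_of_notMem (by simpa using (adj_of_mem e he).adj_sub.ne),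
      Finset.card_singleton]
  have hdisj : ∀ e₁ ∈ M.edgeSet.toFinset, ∀ e₂ ∈ M.edgeSet.toFinset, e₁ ≠ e₂ →
      Disjoint ({e₁.out.1, e₁.out.2} : Finset V) {e₂.out.1, e₂.out.2} := by
    intro e₁ he₁ e₂ he₂ hne
    rw [Set.mem_toFinset] at he₁ he₂
    rw [Finset.disjoint_left]
    intro a ha1 ha2
    have ha1' : a ∈ e₁ := by
      rw [mem_endpoints]; simpa using ha1
    have ha2' : a ∈ e₂ := by
      rw [mem_endpoints]; simpa using ha2
    -- a is in the verts, unique partner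
    have haM : a ∈ M.verts := by
      rcases (mem_endpoints e₁ a).mp ha1' with rfl | rfl
      · exact M.edge_vert (adj_of_mem e₁ he₁)
      · exact M.edge_vert (adj_of_mem e₁ he₁).symm
    obtain ⟨b, hb, hbu⟩ := hM haM
    have key : ∀ e ∈ M.edgeSet, a ∈ e → e = s(a, b) := by
      intro e he hae
      have hout : s(e.out.1, e.out.2) = e := by
        conv_rhs => rw [← e.out_eq]
      rcases (mem_endpoints e a).mp hae with h | h
      · have hadj : M.Adj a e.out.2 := h ▸ adj_of_mem e he
        rw [← hout, ← h, hbu _ hadj]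
      · have hadj : M.Adj a e.out.1 := h ▸ (adj_of_mem e he).symm
        rw [← hout, ← h, hbu _ hadj, Sym2.eq_swap]
    exact hne ((key e₁ he₁ ha1').trans (key e₂ he₂ ha2').symm)
  rw [Set.ncard_eq_toFinset_card', Set.ncard_eq_toFinset_card', h1,
    Finset.card_biUnion hdisj, Finset.sum_congr rfl h2, Finset.sum_const, smul_eq_mul,
    mul_comm]

lemma gammaT_le {S : Set V} (hS : IsTotalDomSet G S) : gammaT G ≤ S.ncard :=
  Nat.sInf_le ⟨S, hS, rfl⟩


lemma verts_card_eq {M : G.Subgraph} (hmax : IsMaximalMatching G M)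
    (hmu : M.edgeSet.ncard = muStar G) : M.verts.ncard = 2 * muStar G := by
  rw [matching_verts_ncard hmax.1, hmu]

lemma condI (h2 : minDeg G = 2) (heq : gammaT G = 2 * muStar G)
    {M : G.Subgraph} (hmax : IsMaximalMatching G M) (hmu : M.edgeSet.ncard = muStar G) :
    ∀ v ∈ M.verts, ∀ w, M.Adj v w → ∀ u ∈ M.verts, G.Adj v u → u = w := by
  intro v hv w hvw u hu hadj
  by_contra hne
  have hwv : w ∈ M.verts := M.edge_vert hvw.symm
  have hS : IsTotalDomSet G (M.verts \ {w}) := by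
    intro p
    by_cases hp : p ∈ M.verts
    · obtain ⟨q, hq, -⟩ := hmax.1 hp
      by_cases hqw : q = w
      · -- p is the partner of w, so p = v
        subst hqw
        obtain ⟨r, hr, hru⟩ := hmax.1 hwv
        have hpv : p = v := (hru p hq.symm).trans (hru v hvw.symm).symm
        subst hpv
        exact ⟨u, ⟨hu, hne⟩, hadj⟩
      · exact ⟨q, ⟨M.edge_vert hq.symm, hqw⟩, hq.adj_sub⟩
    · obtain ⟨q, hq, hqw⟩ := Set.exists_ne_of_one_lt_ncard (s := G.neighborSet p)
        (by have := deg_ge h2 p; omega) w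
      exact ⟨q, ⟨uncovered_nbrs hmax hp hq, hqw⟩, hq⟩
  have hcard : (M.verts \ {w}).ncard = M.verts.ncard - 1 := by
    rw [Set.ncard_diff (by simpa using hwv) (Set.toFinite _), Set.ncard_singleton]
  have hle := gammaT_le hS
  have hv2 : M.verts.ncard = 2 * muStar G := verts_card_eq hmax hmu
  have hpos : 0 < M.verts.ncard := (Set.ncard_pos (Set.toFinite _)).mpr ⟨w, hwv⟩
  omega

lemma condII (h2 : minDeg G = 2) (heq : gammaT G = 2 * muStar G)
    {M : G.Subgraph} (hmax : IsMaximalMatching G M) (hmu : M.edgeSet.ncard = muStar G) :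
    ∀ u v : V, u ∈ M.verts → v ∈ M.verts → u ≠ v →
      (∃ w, G.Adj u w ∧ G.Adj v w) →
      ∀ u' v' : V, M.Adj u u' → M.Adj v v' → ∃ x : V, G.neighborSet x = {u', v'} := by
  intro u v hu hv hne hcom u' v' huu' hvv'
  obtain ⟨c, huc, hvc⟩ := hcom
  by_contra hno
  push_neg at hno
  have hcI := condI h2 heq hmax hmu
  have hu'M : u' ∈ M.verts := M.edge_vert huu'.symm
  have hv'M : v' ∈ M.verts := M.edge_vert hvv'.symm
  have hcM : c ∉ M.verts := by
    intro hc
    obtain ⟨d, hd, -⟩ := hmax.1 hc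
    exact hne ((hcI c hc d hd u hu huc.symm).trans (hcI c hc d hd v hv hvc.symm).symm)
  have hu'v' : u' ≠ v' := by
    rintro rfl
    obtain ⟨r, hr, hru⟩ := hmax.1 hu'M
    exact hne ((hru u huu'.symm).trans (hru v hvv'.symm).symm)
  have key : ∀ p : V, ¬(G.neighborSet p ⊆ {u', v'}) := by
    intro p hp
    refine hno p (Set.eq_of_subset_of_ncard_le hp ?_ (Set.toFinite _)).symm.symm
    · rw [Set.ncard_pair hu'v']
      exact deg_ge h2 p
  have hS : IsTotalDomSet G (insert c (M.verts \ {u', v'})) := by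
    intro p
    by_cases hp : p ∈ M.verts
    · obtain ⟨q, hq, -⟩ := hmax.1 hp
      by_cases hqu : q = u'
      · subst hqu
        obtain ⟨r, hr, hru⟩ := hmax.1 hu'M
        have : p = u := (hru p hq.symm).trans (hru u huu'.symm).symm
        subst this
        exact ⟨c, Set.mem_insert _ _, huc⟩
      · by_cases hqv : q = v'
        · subst hqv
          obtain ⟨r, hr, hru⟩ := hmax.1 hv'M
          have : p = v := (hru p hq.symm).trans (hru v hvv'.symm).symm
          subst this
          exact ⟨c, Set.mem_insert _ _, hvc⟩
        · exact ⟨q, Set.mem_insert_of_mem _ ⟨M.edge_vert hq.symm, by simp [hqu, hqv]⟩,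
            hq.adj_sub⟩
    · obtain ⟨q, hq, hqn⟩ := Set.not_subset.mp (key p)
      have hqM : q ∈ M.verts := uncovered_nbrs hmax hp hq
      refine ⟨q, Set.mem_insert_of_mem _ ⟨hqM, by simpa using hqn⟩, hq⟩
  have hsub : ({u', v'} : Set V) ⊆ M.verts := by
    rintro z (rfl | rfl) <;> assumption
  have hcard : (insert c (M.verts \ {u', v'})).ncard = M.verts.ncard - 2 + 1 := by
    rw [Set.ncard_insert_of_notMem (fun h => hcM h.1) (Set.toFinite _),
      Set.ncard_diff hsub (Set.toFinite _), Set.ncard_pair hu'v']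
  have hle := gammaT_le hS
  have hv2 : M.verts.ncard = 2 * muStar G := verts_card_eq hmax hmu
  have hpos : 2 ≤ M.verts.ncard := by
    rw [hv2]
    have : 0 < M.verts.ncard := (Set.ncard_pos (Set.toFinite _)).mpr ⟨u, hu⟩
    omega
  omega

-- the set {u,t} equals the neighborhood of a degree-2 vertex
lemma nbhd_pin {p a b : V} (hd2 : p ∈ d2 G) (ha : G.Adj p a) (hb : G.Adj p b) (hab : a ≠ b) :
    G.neighborSet p = {a, b} := by
  refine (Set.eq_of_subset_of_ncard_le ?_ ?_ (Set.toFinite _)).symm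
  · rintro z (rfl | rfl) <;> assumption
  · rw [hd2, Set.ncard_pair hab]

lemma walk_closed {A : Set V} (hcl : ∀ p ∈ A, G.neighborSet p ⊆ A) :
    ∀ (p q : V), G.Walk p q → p ∈ A → q ∈ A := by
  intro p q w
  induction w with
  | nil => exact id
  | cons h _ ih => intro hp; exact ih (hcl _ hp h)

/-- The degenerate case: all neighbors other than `v` of `u` and vice versa have
neighborhoods inside `{u,v}`; then `G` is in the family `𝒦`. -/
lemma inK_of_degenerate (h2 : minDeg G = 2) (hconn : G.Connected) {u v : V}
    (huv : G.Adj u v)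
    (hDu : ∀ x, G.Adj u x → x ≠ v → G.neighborSet x ⊆ {u, v})
    (hDv : ∀ x, G.Adj v x → x ≠ u → G.neighborSet x ⊆ {u, v}) : InK G := by
  classical
  set X : Set V := G.neighborSet u \ {v} with hXdef
  have hXN : ∀ x ∈ X, G.neighborSet x = {u, v} := by
    rintro x ⟨hx, hxv⟩
    refine (Set.eq_of_subset_of_ncard_le (hDu x hx (by simpa using hxv)) ?_
      (Set.toFinite _)).symm.symm
    rw [Set.ncard_pair huv.ne]
    exact deg_ge h2 x
  have hXne : X.Nonempty := by
    obtain ⟨q, hq, hqv⟩ := Set.exists_ne_of_one_lt_ncard (s := G.neighborSet u)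
      (by have := deg_ge h2 u; omega) v
    exact ⟨q, hq, by simpa using hqv⟩
  have hXu : u ∉ X := fun h => (G.irrefl (by exact h.1))
  have hXv : v ∉ X := fun h => h.2 rfl
  set A : Set V := insert u (insert v X) with hAdef
  have hclosed : ∀ p ∈ A, G.neighborSet p ⊆ A := by
    intro p hpA
    rcases hpA with hpu | hpv | hp
    · rw [hpu]
      intro q hq
      by_cases hqv : q = v
      · rw [hqv]; exact Set.mem_insert_of_mem _ (Set.mem_insert _ _)
      · exact Set.mem_insert_of_mem _ (Set.mem_insert_of_mem _ ⟨hq, hqv⟩)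
    · rw [hpv]
      intro q hq
      by_cases hqu : q = u
      · rw [hqu]; exact Set.mem_insert _ _
      · have hNq : G.neighborSet q = {u, v} := by
          refine Set.eq_of_subset_of_ncard_le (hDv q hq hqu) ?_ (Set.toFinite _)
          rw [Set.ncard_pair huv.ne]
          exact deg_ge h2 q
        have hqu' : G.Adj q u := by
          have : u ∈ G.neighborSet q := by rw [hNq]; simp
          exact this
        have hqX : q ∈ X := by
          refine ⟨hqu'.symm, ?_⟩
          simpa using (G.ne_of_adj hq).symm
        exact Set.mem_insert_of_mem _ (Set.mem_insert_of_mem _ hqX)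
    · intro q hq
      rw [hXN p hp] at hq
      rcases hq with rfl | rfl
      · exact Set.mem_insert _ _
      · exact Set.mem_insert_of_mem _ (Set.mem_insert _ _)
  have hall : ∀ p : V, p ∈ A := by
    intro p
    obtain ⟨w⟩ := hconn.preconnected u p
    exact walk_closed hclosed u p w (Set.mem_insert _ _)
  -- build the isomorphism
  have hXfin : X.Finite := Set.toFinite _
  have hfX : Fintype X := hXfin.fintype
  set n : ℕ := X.ncard with hn
  have hcardX : Fintype.card X = n := by
    rw [hn, Set.ncard_eq_toFinset_card', Set.toFinset_card]
  have e : X ≃ Fin n := Fintype.equivFinOfCardEq hcardX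
  have hne1 : 1 ≤ n := by
    rw [hn]
    exact (Set.ncard_pos hXfin).mpr hXne
  classical
  set g : Fin n ⊕ Fin 2 → V :=
    Sum.elim (fun i => (e.symm i : V)) (fun j => if j = 0 then u else v) with hg
  have gl : ∀ i, g (.inl i) = (e.symm i : V) := fun i => rfl
  have gr0 : g (.inr 0) = u := by simp [hg]
  have gr1 : g (.inr 1) = v := by simp [hg]
  have fin2 : ∀ j : Fin 2, j = 0 ∨ j = 1 := by decide
  have hbij : Function.Bijective g := by
    constructor
    · rintro (i | j) (i' | j') hgij
      · rw [gl, gl] at hgij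
        rw [e.symm.injective (Subtype.val_injective hgij)]
      · exfalso
        rcases fin2 j' with rfl | rfl
        · rw [gl, gr0] at hgij
          exact hXu (hgij ▸ (e.symm i).2)
        · rw [gl, gr1] at hgij
          exact hXv (hgij ▸ (e.symm i).2)
      · exfalso
        rcases fin2 j with rfl | rfl
        · rw [gr0, gl] at hgij
          exact hXu (hgij.symm ▸ (e.symm i').2)
        · rw [gr1, gl] at hgij
          exact hXv (hgij.symm ▸ (e.symm i').2)
      · rcases fin2 j with rfl | rfl <;> rcases fin2 j' with rfl | rfl
        · rfl
        · rw [gr0, gr1] at hgij; exact absurd hgij huv.ne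
        · rw [gr1, gr0] at hgij; exact absurd hgij huv.ne.symm
        · rfl
    · intro p
      rcases hall p with hpu | hpv | hp
      · exact ⟨.inr 0, by rw [gr0, hpu]⟩
      · exact ⟨.inr 1, by rw [gr1, hpv]⟩
      · exact ⟨.inl (e ⟨p, hp⟩), by rw [gl, e.symm_apply_apply]⟩
  have adjX : ∀ (x : X) (z : V), G.Adj (x : V) z ↔ (z = u ∨ z = v) := by
    intro x z
    constructor
    · intro h
      have : z ∈ G.neighborSet (x : V) := h
      rw [hXN _ x.2] at this
      simpa using this
    · intro h
      have h1 : (u : V) ∈ G.neighborSet (x : V) := by rw [hXN _ x.2]; simp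
      have h2' : (v : V) ∈ G.neighborSet (x : V) := by rw [hXN _ x.2]; simp
      rcases h with rfl | rfl
      · exact h1
      · exact h2'
  have kadj : ∀ a b : Fin n ⊕ Fin 2, (kGraph n).Adj a b ↔
      (a ≠ b ∧ ¬(a.isLeft = true ∧ b.isLeft = true)) := by
    intro a b
    rw [kGraph, fromRel_adj]
    constructor
    · rintro ⟨h1, h2 | h2⟩
      · exact ⟨h1, h2⟩
      · exact ⟨h1, fun hc => h2 ⟨hc.2, hc.1⟩⟩
    · rintro ⟨h1, h2⟩
      exact ⟨h1, Or.inl h2⟩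
  have hiso : kGraph n ≃g G := by
    refine ⟨Equiv.ofBijective g hbij, ?_⟩
    intro a b
    show G.Adj (g a) (g b) ↔ (kGraph n).Adj a b
    rw [kadj]
    rcases a with i | j <;> rcases b with i' | j'
    · rw [gl, gl]
      constructor
      · intro h
        exfalso
        rcases (adjX _ _).mp h with h' | h'
        · exact hXu (h' ▸ (e.symm i').2)
        · exact hXv (h' ▸ (e.symm i').2)
      · rintro ⟨-, h⟩
        exact absurd ⟨rfl, rfl⟩ h
    · rcases fin2 j' with rfl | rfl
      · rw [gl, gr0]
        constructor
        · intro h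
          exact ⟨by simp, by simp⟩
        · intro h
          exact (adjX _ _).mpr (Or.inl rfl)
      · rw [gl, gr1]
        constructor
        · intro h
          exact ⟨by simp, by simp⟩
        · intro h
          exact (adjX _ _).mpr (Or.inr rfl)
    · rcases fin2 j with rfl | rfl
      · rw [gr0, gl]
        constructor
        · intro h
          exact ⟨by simp, by simp⟩
        · intro h
          exact ((adjX _ _).mpr (Or.inl rfl)).symm
      · rw [gr1, gl]
        constructor
        · intro h
          exact ⟨by simp, by simp⟩
        · intro h
          exact ((adjX _ _).mpr (Or.inr rfl)).symm
    · rcases fin2 j with rfl | rfl <;> rcases fin2 j' with rfl | rfl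
      · rw [gr0]
        simp
      · rw [gr0, gr1]
        constructor
        · intro h
          refine ⟨fun hc => ?_, by simp⟩
          have : (0 : Fin 2) = 1 := Sum.inr_injective hc
          exact absurd this (by decide)
        · intro h
          exact huv
      · rw [gr1, gr0]
        constructor
        · intro h
          refine ⟨fun hc => ?_, by simp⟩
          have : (1 : Fin 2) = 0 := Sum.inr_injective hc
          exact absurd this (by decide)
        · intro h
          exact huv.symm
      · rw [gr1]
        simp
  exact ⟨n, hne1, ⟨hiso.symm⟩⟩

lemma pairwise_six_iff {a b c d e f : V} :
    List.Pairwise (· ≠ ·) [a, b, c, d, e, f] ↔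
      (a ≠ b ∧ a ≠ c ∧ a ≠ d ∧ a ≠ e ∧ a ≠ f) ∧ (b ≠ c ∧ b ≠ d ∧ b ≠ e ∧ b ≠ f) ∧
      (c ≠ d ∧ c ≠ e ∧ c ≠ f) ∧ (d ≠ e ∧ d ≠ f) ∧ e ≠ f := by
  constructor
  · intro h
    simp only [List.pairwise_cons, List.mem_cons, List.not_mem_nil, List.mem_singleton] at h
    obtain ⟨h1, h2, h3, h4, h5, -⟩ := h
    exact ⟨⟨h1 b (by tauto), h1 c (by tauto), h1 d (by tauto), h1 e (by tauto), h1 f (by tauto)⟩,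
      ⟨h2 c (by tauto), h2 d (by tauto), h2 e (by tauto), h2 f (by tauto)⟩,
      ⟨h3 d (by tauto), h3 e (by tauto), h3 f (by tauto)⟩, ⟨h4 e (by tauto), h4 f (by tauto)⟩,
      h5 f (by tauto)⟩
  · intro h
    simp only [List.pairwise_cons, List.mem_cons, List.not_mem_nil, List.mem_singleton]
    refine ⟨?_, ?_, ?_, ?_, ?_, by simp⟩
    · rintro a' (rfl | rfl | rfl | rfl | rfl | h') <;> tauto
    · rintro a' (rfl | rfl | rfl | rfl | h') <;> tauto
    · rintro a' (rfl | rfl | rfl | h') <;> tauto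
    · rintro a' (rfl | rfl | h') <;> tauto
    · rintro a' (rfl | h') <;> tauto

lemma nondegen {M : G.Subgraph} (hmax : IsMaximalMatching G M) (hcond : MatchingCond G M)
    (h2 : minDeg G = 2) {u v x₀ a : V} (huv : M.Adj u v)
    (hux : G.Adj u x₀) (hx₀ : x₀ ∉ M.verts) (hxa : G.Adj x₀ a) (hau : a ≠ u) (hav : a ≠ v) :
    s(u, v) ∈ mSet G := by
  have hu : u ∈ M.verts := M.edge_vert huv
  have hv : v ∈ M.verts := M.edge_vert huv.symm
  have haM : a ∈ M.verts := (touch hmax hxa).resolve_left hx₀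
  obtain ⟨a', ha', -⟩ := hmax.1 haM
  have ha'M : a' ∈ M.verts := M.edge_vert ha'.symm
  have ha'u : a' ≠ u := by
    rintro rfl
    obtain ⟨r, hr, hru⟩ := hmax.1 hu
    exact hav ((hru a ha'.symm).trans (hru v huv).symm)
  have ha'v : a' ≠ v := by
    rintro rfl
    obtain ⟨r, hr, hru⟩ := hmax.1 hv
    exact hau ((hru a ha'.symm).trans (hru u huv.symm).symm)
  obtain ⟨z, hz⟩ := hcond.2 u a hu haM (fun h => hau h.symm) ⟨x₀, hux, hxa.symm⟩ v a' huv ha'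
  have hzv : G.Adj z v := by
    have : v ∈ G.neighborSet z := by rw [hz]; simp
    exact this
  have hza' : G.Adj z a' := by
    have : a' ∈ G.neighborSet z := by rw [hz]; simp
    exact this
  have hva' : v ≠ a' := fun h => ha'v h.symm
  have hzM : z ∉ M.verts := by
    intro hzM
    obtain ⟨zp, hzp, -⟩ := hmax.1 hzM
    exact hva' ((hcond.1 z hzM zp hzp v hv hzv).trans (hcond.1 z hzM zp hzp a' ha'M hza').symm)
  obtain ⟨z', hz'⟩ := hcond.2 v a' hv ha'M hva' ⟨z, hzv.symm, hza'.symm⟩ u a huv.symm ha'.symm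
  have hz'u : G.Adj z' u := by
    have : u ∈ G.neighborSet z' := by rw [hz']; simp
    exact this
  have hz'a : G.Adj z' a := by
    have : a ∈ G.neighborSet z' := by rw [hz']; simp
    exact this
  have hua : u ≠ a := fun h => hau h.symm
  have hz'M : z' ∉ M.verts := by
    intro hzM'
    obtain ⟨zp, hzp, -⟩ := hmax.1 hzM'
    exact hua ((hcond.1 z' hzM' zp hzp u hu hz'u).trans (hcond.1 z' hzM' zp hzp a haM hz'a).symm)
  have haa' : a ≠ a' := (ha'.adj_sub).ne
  have huvG : u ≠ v := (huv.adj_sub).ne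
  have hz'd2 : z' ∈ d2 G := by
    show (G.neighborSet z').ncard = 2
    rw [hz', Set.ncard_pair hua]
  have hzd2 : z ∈ d2 G := by
    show (G.neighborSet z).ncard = 2
    rw [hz, Set.ncard_pair hva']
  have hzz' : z' ≠ z := by
    intro h
    have hm : u ∈ G.neighborSet z := h ▸ (show u ∈ G.neighborSet z' from hz'u)
    rw [hz] at hm
    rcases hm with h1 | h1
    · exact huvG h1
    · exact ha'u h1.symm
  refine ⟨u, v, z', z, a', a, rfl, ⟨hz'u.symm, hz'd2⟩, ⟨hzv.symm, hzd2⟩, ?_, ?_, ?_, ?_, ?_,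
    ?_, ?_, ?_, ?_, ?_, ?_, ?_, ?_, ?_, ?_, ?_⟩
  · -- pairwise distinct [z', u, v, z, a', a]
    rw [pairwise_six_iff]
    refine ⟨⟨?_, ?_, hzz', ?_, ?_⟩, ⟨huvG, ?_, Ne.symm ha'u, hua⟩, ⟨?_, hva', Ne.symm hav⟩,
      ⟨?_, ?_⟩, Ne.symm haa'⟩
    · exact fun h => hz'M (by rw [h]; exact hu)
    · exact fun h => hz'M (by rw [h]; exact hv)
    · exact fun h => hz'M (by rw [h]; exact ha'M)
    · exact fun h => hz'M (by rw [h]; exact haM)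
    · exact fun h => hzM (by rw [← h]; exact hu)
    · exact fun h => hzM (by rw [← h]; exact hv)
    · exact fun h => hzM (by rw [h]; exact ha'M)
    · exact fun h => hzM (by rw [h]; exact haM)
  · exact hz'u
  · exact huv.adj_sub
  · exact hzv.symm
  · exact hza'
  · exact ha'.symm.adj_sub
  · exact hz'a.symm
  · -- ¬ Adj z' v
    intro h
    have : v ∈ G.neighborSet z' := h
    rw [hz'] at this
    rcases this with h1 | h1
    · exact huvG h1.symm
    · exact hav h1.symm
  · -- ¬ Adj z' z
    intro h
    have : z ∈ G.neighborSet z' := h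
    rw [hz'] at this
    rcases this with h1 | h1
    · exact hzM (by rw [h1]; exact hu)
    · exact hzM (by rw [h1]; exact haM)
  · -- ¬ Adj z' a'
    intro h
    have : a' ∈ G.neighborSet z' := h
    rw [hz'] at this
    rcases this with h1 | h1
    · exact ha'u h1
    · exact haa' h1.symm
  · -- ¬ Adj u z
    intro h
    have : u ∈ G.neighborSet z := h.symm
    rw [hz] at this
    rcases this with h1 | h1
    · exact huvG h1
    · exact ha'u h1.symm
  · -- ¬ Adj u a'
    intro h
    exact ha'v (hcond.1 u hu v huv a' ha'M h)
  · -- ¬ Adj u a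
    intro h
    exact hav (hcond.1 u hu v huv a haM h)
  · -- ¬ Adj v a'
    intro h
    exact ha'u (hcond.1 v hv u huv.symm a' ha'M h)
  · -- ¬ Adj v a
    intro h
    exact hau (hcond.1 v hv u huv.symm a haM h)
  · -- ¬ Adj z a
    intro h
    have : a ∈ G.neighborSet z := h
    rw [hz] at this
    rcases this with h1 | h1
    · exact hav h1
    · exact haa' h1

lemma matching_subset_mSet (h2 : minDeg G = 2) (hconn : G.Connected) (hK : ¬InK G)
    {M : G.Subgraph} (hmax : IsMaximalMatching G M) (hcond : MatchingCond G M) :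
    M.edgeSet ⊆ mSet G := by
  intro e
  induction e using Sym2.ind with
  | _ u v =>
  intro he
  have huv : M.Adj u v := Subgraph.mem_edgeSet.mp he
  have hu : u ∈ M.verts := M.edge_vert huv
  have hv : v ∈ M.verts := M.edge_vert huv.symm
  by_cases hDu : ∃ x, G.Adj u x ∧ x ∉ M.verts ∧ ∃ a, G.Adj x a ∧ a ≠ u ∧ a ≠ v
  · obtain ⟨x, hux, hxM, a, hxa, hau, hav⟩ := hDu
    exact nondegen hmax hcond h2 huv hux hxM hxa hau hav
  by_cases hDv : ∃ x, G.Adj v x ∧ x ∉ M.verts ∧ ∃ a, G.Adj x a ∧ a ≠ v ∧ a ≠ u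
  · obtain ⟨x, hvx, hxM, a, hxa, hav, hau⟩ := hDv
    rw [Sym2.eq_swap]
    exact nondegen hmax hcond h2 huv.symm hvx hxM hxa hav hau
  · push_neg at hDu hDv
    refine absurd (inK_of_degenerate h2 hconn huv.adj_sub ?_ ?_) hK
    · intro x hux hxv q hq
      have hxM : x ∉ M.verts := fun hxM => hxv (hcond.1 u hu v huv x hxM hux)
      rcases eq_or_ne q u with rfl | hqu
      · simp
      · have := hDu x hux hxM q hq hqu
        rw [this]
        simp
    · intro x hvx hxu q hq
      have hxM : x ∉ M.verts := fun hxM => hxu (hcond.1 v hv u huv.symm x hxM hvx)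
      rcases eq_or_ne q v with rfl | hqv
      · simp
      · have := hDv x hvx hxM q hq hqv
        rw [this]
        simp

lemma caseB (h2 : minDeg G = 2) (heq : gammaT G = 2 * muStar G) (hconn : G.Connected)
    (hC : ¬IsC6 G) {M : G.Subgraph} (hmax : IsMaximalMatching G M)
    (hmu : M.edgeSet.ncard = muStar G) {x u v y w t : V}
    (hx : x ∈ G.neighborSet u ∩ d2 G) (hy : y ∈ G.neighborSet v ∩ d2 G)
    (h6 : IsInducedC6 G x u v y w t) (hu : u ∈ M.verts) (hv : v ∉ M.verts) : False := by
  classical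
  obtain ⟨hdist, hxu, huv, hvy, hyw, hwt, htx, nxv, nxy, nxw, nuy, nuw, nut, nvw, nvt, nyt⟩ := h6
  rw [pairwise_six_iff] at hdist
  obtain ⟨⟨dxu, dxv, dxy, dxw, dxt⟩, ⟨duv, duy, duw, dut⟩, ⟨dvy, dvw, dvt⟩, ⟨dyw, dyt⟩, dwt⟩ :=
    hdist
  have hcI := condI h2 heq hmax hmu
  have hcII := condII h2 heq hmax hmu
  have hNx : G.neighborSet x = {u, t} := nbhd_pin hx.2 hxu htx.symm dut
  have hNy : G.neighborSet y = {v, w} := nbhd_pin hy.2 hvy.symm hyw dvw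
  have hyM : y ∈ M.verts := (touch hmax hvy).resolve_left hv
  obtain ⟨py, hpy, hpyu⟩ := hmax.1 hyM
  have hpymem : py ∈ G.neighborSet y := hpy.adj_sub
  have hywM : M.Adj y w := by
    rw [hNy] at hpymem
    rcases hpymem with h1 | h1
    · exact absurd (M.edge_vert hpy.symm) (h1 ▸ hv)
    · exact h1 ▸ hpy
  have hwM : w ∈ M.verts := M.edge_vert hywM.symm
  have htM : t ∉ M.verts := fun htM => dyt (hcI w hwM y hywM.symm t htM hwt).symm
  have hxM : x ∈ M.verts := (touch hmax htx).resolve_left htM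
  obtain ⟨px, hpx, hpxu⟩ := hmax.1 hxM
  have hpxmem : px ∈ G.neighborSet x := hpx.adj_sub
  have hxuM : M.Adj x u := by
    rw [hNx] at hpxmem
    rcases hpxmem with h1 | h1
    · exact h1 ▸ hpx
    · exact absurd (M.edge_vert hpx.symm) (h1 ▸ htM)
  obtain ⟨pw, hpw, hpwu⟩ := hmax.1 hwM
  obtain ⟨pu, hpu, hpuu⟩ := hmax.1 hu
  have hpxu2 : ∀ z, M.Adj x z → z = u := fun z hz => (hpxu z hz).trans (hpxu u hxuM).symm
  have hpyw2 : ∀ z, M.Adj y z → z = w := fun z hz => (hpyu z hz).trans (hpyu w hywM).symm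
  have hpu2 : ∀ z, M.Adj u z → z = x := fun z hz => (hpuu z hz).trans (hpuu x hxuM.symm).symm
  have hpw2 : ∀ z, M.Adj w z → z = y := fun z hz => (hpwu z hz).trans (hpwu y hywM.symm).symm
  have hv2 : M.verts.ncard = 2 * muStar G := verts_card_eq hmax hmu
  have contra : ∀ (c a b : V), c ∉ M.verts → a ∈ M.verts → b ∈ M.verts → a ≠ b →
      IsTotalDomSet G (insert c (M.verts \ {a, b})) → False := by
    intro c a b hc ha hb hab hS
    have hsub : ({a, b} : Set V) ⊆ M.verts := by rintro z (rfl | rfl) <;> assumption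
    have h2card : 2 ≤ M.verts.ncard := by
      rw [← Set.ncard_pair hab]
      exact Set.ncard_le_ncard hsub (Set.toFinite _)
    have hcard : (insert c (M.verts \ {a, b})).ncard = M.verts.ncard - 2 + 1 := by
      rw [Set.ncard_insert_of_notMem (fun h => hc h.1) (Set.toFinite _),
        Set.ncard_diff hsub (Set.toFinite _), Set.ncard_pair hab]
    have hle := gammaT_le hS
    omega
  -- Step 1 : N t = {x, w}
  have hNt : G.neighborSet t = {x, w} := by
    by_contra hne
    have hsub' : ({x, w} : Set V) ⊆ G.neighborSet t := by
      rintro z (rfl | rfl)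
      · exact htx
      · exact hwt.symm
    obtain ⟨c, hc, hcn⟩ := Set.not_subset.mp
      (fun hsub2 => hne (Set.Subset.antisymm hsub2 hsub'))
    have hcM : c ∈ M.verts := uncovered_nbrs hmax htM hc
    simp only [Set.mem_insert_iff, Set.mem_singleton_iff] at hcn
    push_neg at hcn
    refine contra v x w hv hxM hwM dxw ?_
    intro p
    by_cases hpM : p ∈ M.verts
    · obtain ⟨q, hq, -⟩ := hmax.1 hpM
      by_cases hqx : q = x
      · have hpeq : p = u := hpxu2 p (by rw [hqx] at hq; exact hq.symm)
        refine ⟨v, Set.mem_insert _ _, ?_⟩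
        rw [hpeq]
        exact huv
      · by_cases hqw : q = w
        · have hpeq : p = y := hpw2 p (by rw [hqw] at hq; exact hq.symm)
          refine ⟨v, Set.mem_insert _ _, ?_⟩
          rw [hpeq]
          exact hvy.symm
        · refine ⟨q, Set.mem_insert_of_mem _ ⟨M.edge_vert hq.symm, ?_⟩, hq.adj_sub⟩
          simp only [Set.mem_insert_iff, Set.mem_singleton_iff]
          push_neg
          exact ⟨hqx, hqw⟩
    · by_cases hpt : p = t
      · refine ⟨c, Set.mem_insert_of_mem _ ⟨hcM, ?_⟩, ?_⟩
        · simp only [Set.mem_insert_iff, Set.mem_singleton_iff]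
          push_neg
          exact hcn
        · rw [hpt]
          exact hc
      · by_cases hpv : p = v
        · refine ⟨u, Set.mem_insert_of_mem _ ⟨hu, ?_⟩, ?_⟩
          · simp only [Set.mem_insert_iff, Set.mem_singleton_iff]
            push_neg
            exact ⟨fun h => dxu h.symm, duw⟩
          · rw [hpv]
            exact huv.symm
        · have hNp : G.neighborSet p ⊆ M.verts := uncovered_nbrs hmax hpM
          have hns : ¬ G.neighborSet p ⊆ {x, w} := by
            intro hsub2
            have hNp2 : G.neighborSet p = {x, w} := Set.eq_of_subset_of_ncard_le hsub2
              (by rw [Set.ncard_pair dxw]; exact deg_ge h2 p) (Set.toFinite _)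
            have hpx' : p ∈ G.neighborSet x := by
              have : x ∈ G.neighborSet p := by rw [hNp2]; simp
              exact (show G.Adj p x from this).symm
            rw [hNx] at hpx'
            rcases hpx' with h1 | h1
            · exact hpM (h1 ▸ hu)
            · exact hpt h1
          obtain ⟨q, hq2, hqn⟩ := Set.not_subset.mp hns
          exact ⟨q, Set.mem_insert_of_mem _ ⟨hNp hq2, by simpa using hqn⟩, hq2⟩
  -- Step 2 : N v = {u, y}
  have hNv : G.neighborSet v = {u, y} := by
    by_contra hne
    have hsub' : ({u, y} : Set V) ⊆ G.neighborSet v := by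
      rintro z (rfl | rfl)
      · exact huv.symm
      · exact hvy
    obtain ⟨c, hc, hcn⟩ := Set.not_subset.mp
      (fun hsub2 => hne (Set.Subset.antisymm hsub2 hsub'))
    have hcM : c ∈ M.verts := uncovered_nbrs hmax hv hc
    simp only [Set.mem_insert_iff, Set.mem_singleton_iff] at hcn
    push_neg at hcn
    refine contra t u y htM hu hyM duy ?_
    intro p
    by_cases hpM : p ∈ M.verts
    · obtain ⟨q, hq, -⟩ := hmax.1 hpM
      by_cases hqu : q = u
      · have hpeq : p = x := hpu2 p (by rw [hqu] at hq; exact hq.symm)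
        refine ⟨t, Set.mem_insert _ _, ?_⟩
        rw [hpeq]
        exact htx.symm
      · by_cases hqy : q = y
        · have hpeq : p = w := hpyw2 p (by rw [hqy] at hq; exact hq.symm)
          refine ⟨t, Set.mem_insert _ _, ?_⟩
          rw [hpeq]
          exact hwt
        · refine ⟨q, Set.mem_insert_of_mem _ ⟨M.edge_vert hq.symm, ?_⟩, hq.adj_sub⟩
          simp only [Set.mem_insert_iff, Set.mem_singleton_iff]
          push_neg
          exact ⟨hqu, hqy⟩
    · by_cases hpv : p = v
      · refine ⟨c, Set.mem_insert_of_mem _ ⟨hcM, ?_⟩, ?_⟩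
        · simp only [Set.mem_insert_iff, Set.mem_singleton_iff]
          push_neg
          exact hcn
        · rw [hpv]
          exact hc
      · by_cases hpt : p = t
        · refine ⟨x, Set.mem_insert_of_mem _ ⟨hxM, ?_⟩, ?_⟩
          · simp only [Set.mem_insert_iff, Set.mem_singleton_iff]
            push_neg
            exact ⟨dxu, dxy⟩
          · rw [hpt]
            exact htx
        · have hNp : G.neighborSet p ⊆ M.verts := uncovered_nbrs hmax hpM
          have hns : ¬ G.neighborSet p ⊆ {u, y} := by
            intro hsub2
            have hNp2 : G.neighborSet p = {u, y} := Set.eq_of_subset_of_ncard_le hsub2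
              (by rw [Set.ncard_pair duy]; exact deg_ge h2 p) (Set.toFinite _)
            have hpy' : p ∈ G.neighborSet y := by
              have : y ∈ G.neighborSet p := by rw [hNp2]; simp
              exact (show G.Adj p y from this).symm
            rw [hNy] at hpy'
            rcases hpy' with h1 | h1
            · exact hpv h1
            · exact hpM (h1 ▸ hwM)
          obtain ⟨q, hq2, hqn⟩ := Set.not_subset.mp hns
          exact ⟨q, Set.mem_insert_of_mem _ ⟨hNp hq2, by simpa using hqn⟩, hq2⟩
  -- Step 3 : N u = {x, v}
  have hNu : G.neighborSet u = {x, v} := by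
    refine Set.Subset.antisymm ?_ ?_
    · intro z hz
      by_contra hzn
      simp only [Set.mem_insert_iff, Set.mem_singleton_iff] at hzn
      push_neg at hzn
      obtain ⟨hzx, hzv⟩ := hzn
      have hzadj : G.Adj u z := hz
      have hzM : z ∉ M.verts := fun hzM => hzx (hcI u hu x hxuM.symm z hzM hzadj)
      obtain ⟨c, hc, hcu⟩ := Set.exists_ne_of_one_lt_ncard (s := G.neighborSet z)
        (by have := deg_ge h2 z; omega) u
      have hcM : c ∈ M.verts := uncovered_nbrs hmax hzM hc
      obtain ⟨c', hc', -⟩ := hmax.1 hcM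
      obtain ⟨p, hp⟩ := hcII u c hu hcM (fun h => hcu h.symm)
        ⟨z, hzadj, (show G.Adj z c from hc).symm⟩ x c' hxuM.symm hc'
      have hpmem : p ∈ G.neighborSet x := by
        have : x ∈ G.neighborSet p := by rw [hp]; simp
        exact (show G.Adj p x from this).symm
      rw [hNx] at hpmem
      have hc'M : c' ∈ M.verts := M.edge_vert hc'.symm
      rcases hpmem with h1 | h1
      · -- p = u : then v ∈ N u = {x, c'}, impossible
        have hvmem : v ∈ ({x, c'} : Set V) := by
          rw [← hp, h1]
          exact huv
        rcases hvmem with h3 | h3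
        · exact dxv h3.symm
        · exact hv (h3 ▸ hc'M)
      · -- p = t : then c' = w, c = y, z ∈ N y
        have hwmem : w ∈ ({x, c'} : Set V) := by
          rw [← hp, h1]
          exact hwt.symm
        rcases hwmem with h3 | h3
        · exact dxw h3.symm
        · have hcy : c = y := by
            rw [← h3] at hc'
            exact hpw2 c hc'.symm
          have hzy : z ∈ G.neighborSet y := by
            rw [← hcy]
            exact (show G.Adj z c from hc).symm
          rw [hNy] at hzy
          rcases hzy with h4 | h4
          · exact hzv h4
          · exact hzM (h4 ▸ hwM)
    · rintro z (rfl | rfl)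
      · exact hxu.symm
      · exact huv
  -- Step 4 : N w = {y, t}
  have hNw : G.neighborSet w = {y, t} := by
    refine Set.Subset.antisymm ?_ ?_
    · intro z hz
      by_contra hzn
      simp only [Set.mem_insert_iff, Set.mem_singleton_iff] at hzn
      push_neg at hzn
      obtain ⟨hzy, hzt⟩ := hzn
      have hzadj : G.Adj w z := hz
      have hzM : z ∉ M.verts := fun hzM => hzy (hcI w hwM y hywM.symm z hzM hzadj)
      obtain ⟨c, hc, hcw⟩ := Set.exists_ne_of_one_lt_ncard (s := G.neighborSet z)
        (by have := deg_ge h2 z; omega) w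
      have hcM : c ∈ M.verts := uncovered_nbrs hmax hzM hc
      obtain ⟨c', hc', -⟩ := hmax.1 hcM
      obtain ⟨p, hp⟩ := hcII w c hwM hcM (fun h => hcw h.symm)
        ⟨z, hzadj, (show G.Adj z c from hc).symm⟩ y c' hywM.symm hc'
      have hpmem : p ∈ G.neighborSet y := by
        have : y ∈ G.neighborSet p := by rw [hp]; simp
        exact (show G.Adj p y from this).symm
      rw [hNy] at hpmem
      have hc'M : c' ∈ M.verts := M.edge_vert hc'.symm
      rcases hpmem with h1 | h1
      · -- p = v : N v = {u, y} = {y, c'} so c' = u, c = x, z ∈ N x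
        have humem : u ∈ ({y, c'} : Set V) := by
          rw [← hp, h1]
          exact huv.symm
        rcases humem with h3 | h3
        · exact duy h3
        · have hcx : c = x := by
            rw [← h3] at hc'
            exact hpu2 c hc'.symm
          have hzx : z ∈ G.neighborSet x := by
            rw [← hcx]
            exact (show G.Adj z c from hc).symm
          rw [hNx] at hzx
          rcases hzx with h4 | h4
          · exact hzM (h4 ▸ hu)
          · exact hzt h4
      · -- p = w : t ∈ N w = {y, c'}, impossible
        have htmem : t ∈ ({y, c'} : Set V) := by
          rw [← hp, h1]
          exact hwt
        rcases htmem with h3 | h3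
        · exact dyt h3.symm
        · exact htM (h3 ▸ hc'M)
    · rintro z (rfl | rfl)
      · exact hyw.symm
      · exact hwt
  -- Now G is a 6-cycle on {x, u, v, y, w, t}
  set A : Set V := {x, u, v, y, w, t} with hA
  have hclosed : ∀ p ∈ A, G.neighborSet p ⊆ A := by
    intro p hp q hq
    rcases hp with h | h | h | h | h | h <;> rw [h] at hq
    · rw [hNx] at hq
      rcases hq with rfl | rfl
      · right; left; rfl
      · right; right; right; right; right; rfl
    · rw [hNu] at hq
      rcases hq with rfl | rfl
      · left; rfl
      · right; right; left; rfl
    · rw [hNv] at hq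
      rcases hq with rfl | rfl
      · right; left; rfl
      · right; right; right; left; rfl
    · rw [hNy] at hq
      rcases hq with rfl | rfl
      · right; right; left; rfl
      · right; right; right; right; left; rfl
    · rw [hNw] at hq
      rcases hq with rfl | rfl
      · right; right; right; left; rfl
      · right; right; right; right; right; rfl
    · rw [hNt] at hq
      rcases hq with rfl | rfl
      · left; rfl
      · right; right; right; right; left; rfl
  have hall : ∀ p : V, p ∈ A := by
    intro p
    obtain ⟨wk⟩ := hconn.preconnected x p
    exact walk_closed hclosed x p wk (by left; rfl)
  set g : V → Fin 6 := fun p =>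
    if p = x then 0 else if p = u then 1 else if p = v then 2 else if p = y then 3 else
      if p = w then 4 else 5 with hgdef
  have hgx : g x = 0 := by simp [hgdef]
  have hgu : g u = 1 := by simp [hgdef, dxu.symm]
  have hgv : g v = 2 := by simp [hgdef, dxv.symm, duv.symm]
  have hgy : g y = 3 := by simp [hgdef, dxy.symm, duy.symm, dvy.symm]
  have hgw : g w = 4 := by simp [hgdef, dxw.symm, duw.symm, dvw.symm, dyw.symm]
  have hgt : g t = 5 := by simp [hgdef, dxt.symm, dut.symm, dvt.symm, dyt.symm, dwt.symm]
  have hfg : ∀ i : Fin 6, g (![x, u, v, y, w, t] i) = i := by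
    intro i
    match i with
    | 0 => exact hgx
    | 1 => exact hgu
    | 2 => exact hgv
    | 3 => exact hgy
    | 4 => exact hgw
    | 5 => exact hgt
  have hgf : ∀ p : V, ![x, u, v, y, w, t] (g p) = p := by
    intro p
    rcases hall p with h | h | h | h | h | h <;> rw [h]
    · rw [hgx]; rfl
    · rw [hgu]; rfl
    · rw [hgv]; rfl
    · rw [hgy]; rfl
    · rw [hgw]; rfl
    · rw [hgt]; rfl
  have hiso : cycleGraph 6 ≃g G := by
    refine ⟨⟨![x, u, v, y, w, t], g, hfg, hgf⟩, ?_⟩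
    intro a b
    show G.Adj (![x, u, v, y, w, t] a) (![x, u, v, y, w, t] b) ↔ (cycleGraph 6).Adj a b
    fin_cases a <;> fin_cases b <;>
      first
        | exact iff_of_false (G.irrefl) (by decide)
        | exact iff_of_true hxu (by decide)
        | exact iff_of_true hxu.symm (by decide)
        | exact iff_of_true huv (by decide)
        | exact iff_of_true huv.symm (by decide)
        | exact iff_of_true hvy (by decide)
        | exact iff_of_true hvy.symm (by decide)
        | exact iff_of_true hyw (by decide)
        | exact iff_of_true hyw.symm (by decide)
        | exact iff_of_true hwt (by decide)
        | exact iff_of_true hwt.symm (by decide)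
        | exact iff_of_true htx (by decide)
        | exact iff_of_true htx.symm (by decide)
        | exact iff_of_false nxv (by decide)
        | exact iff_of_false (fun h => nxv h.symm) (by decide)
        | exact iff_of_false nxy (by decide)
        | exact iff_of_false (fun h => nxy h.symm) (by decide)
        | exact iff_of_false nxw (by decide)
        | exact iff_of_false (fun h => nxw h.symm) (by decide)
        | exact iff_of_false nuy (by decide)
        | exact iff_of_false (fun h => nuy h.symm) (by decide)
        | exact iff_of_false nuw (by decide)
        | exact iff_of_false (fun h => nuw h.symm) (by decide)
        | exact iff_of_false nut (by decide)
        | exact iff_of_false (fun h => nut h.symm) (by decide)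
        | exact iff_of_false nvw (by decide)
        | exact iff_of_false (fun h => nvw h.symm) (by decide)
        | exact iff_of_false nvt (by decide)
        | exact iff_of_false (fun h => nvt h.symm) (by decide)
        | exact iff_of_false nyt (by decide)
        | exact iff_of_false (fun h => nyt h.symm) (by decide)
  exact hC ⟨hiso.symm⟩

lemma mSet_subset_matching (h2 : minDeg G = 2) (heq : gammaT G = 2 * muStar G)
    (hconn : G.Connected) (hC : ¬IsC6 G) {M : G.Subgraph} (hmax : IsMaximalMatching G M)
    (hmu : M.edgeSet.ncard = muStar G) : mSet G ⊆ M.edgeSet := by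
  rintro e ⟨u, v, x, y, w, t, rfl, hx, hy, h6⟩
  have huv : G.Adj u v := h6.2.2.1
  by_cases hu : u ∈ M.verts <;> by_cases hv : v ∈ M.verts
  · obtain ⟨q, hq, hqu⟩ := hmax.1 hu
    have hveq := condI h2 heq hmax hmu u hu q hq v hv huv
    rw [Subgraph.mem_edgeSet]
    rw [hveq]
    exact hq
  · exact absurd (caseB h2 heq hconn hC hmax hmu hx hy h6 hu hv) id
  · obtain ⟨hdist, hxu, huv', hvy, hyw, hwt, htx, nxv, nxy, nxw, nuy, nuw, nut, nvw, nvt,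
      nyt⟩ := h6
    rw [pairwise_six_iff] at hdist
    obtain ⟨⟨dxu, dxv, dxy, dxw, dxt⟩, ⟨duv, duy, duw, dut⟩, ⟨dvy, dvw, dvt⟩, ⟨dyw, dyt⟩,
      dwt⟩ := hdist
    have h6' : IsInducedC6 G y v u x t w :=
      ⟨pairwise_six_iff.mpr ⟨⟨dvy.symm, duy.symm, dxy.symm, dyt, dyw⟩,
        ⟨duv.symm, dxv.symm, dvt, dvw⟩, ⟨dxu.symm, dut, duw⟩, ⟨dxt, dxw⟩, dwt.symm⟩,
        hvy.symm, huv'.symm, hxu.symm, htx.symm, hwt.symm, hyw.symm,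
        fun h => nuy h.symm, fun h => nxy h.symm, nyt, fun h => nxv h.symm, nvt, nvw,
        nut, nuw, nxw⟩
    exact absurd (caseB h2 heq hconn hC hmax hmu hy hx h6' hv hu) id
  · rcases touch hmax huv with h | h
    · exact absurd h hu
    · exact absurd h hv

end Basic

/-- Let `G` be a finite connected graph with `δ(G) = 2` and `γ_t(G) = 2 μ*(G)` which is
neither in `𝒦` nor a 6-cycle. Then `𝓜(G)` is a maximal matching satisfying conditions
(i) and (ii), and it is the unique maximal matching satisfying them. -/
theorem statement14 [Fintype V] (G : SimpleGraph V)
    (hconn : G.Connected) (h2 : minDeg G = 2)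
    (heq : gammaT G = 2 * muStar G) (hK : ¬InK G) (hC : ¬IsC6 G) :
    ∃ M : G.Subgraph, M.edgeSet = mSet G ∧ IsMaximalMatching G M ∧ MatchingCond G M ∧
      ∀ M' : G.Subgraph, IsMaximalMatching G M' → MatchingCond G M' →
        M'.edgeSet = mSet G := by
  obtain ⟨M₀, hmax₀, hmu₀⟩ := exists_min_maximal G
  have hcond₀ : MatchingCond G M₀ := ⟨condI h2 heq hmax₀ hmu₀, condII h2 heq hmax₀ hmu₀⟩
  have hEq : M₀.edgeSet = mSet G :=
    Set.Subset.antisymm (matching_subset_mSet h2 hconn hK hmax₀ hcond₀)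
      (mSet_subset_matching h2 heq hconn hC hmax₀ hmu₀)
  refine ⟨M₀, hEq, hmax₀, hcond₀, ?_⟩
  intro M' hmax' hcond'
  have hsub' : M'.edgeSet ⊆ M₀.edgeSet := by
    rw [hEq]
    exact matching_subset_mSet h2 hconn hK hmax' hcond'
  rw [← hEq]
  exact hmax'.2 M₀ hmax₀.1 hsub'


end TotalDomMM
end

section
/- Let G be a finite simple graph with no isolated vertices satisfying γ_t(G) = 2μ*(G), let M be a maximal matching of G of minimum cardinality, and let v ∈ V(M) be such that M_p(v) is not a support vertex of G. Then M_p(v) is the unique neighbor of v among the vertices of V(M), i.e., N(v) ∩ V(M) = {M_p(v)}. -/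
open SimpleGraph

namespace TotalDomMM

variable {V : Type*}

lemma verts_card_le {G : SimpleGraph V} [Fintype V] {M : G.Subgraph}
    (hM : M.IsMatching) : M.verts.ncard ≤ 2 * M.edgeSet.ncard := by
  classical
  rw [Set.ncard_eq_toFinset_card', Set.ncard_eq_toFinset_card']
  set f : V → Sym2 V := fun x => if h : x ∈ M.verts then s(x, (hM h).choose) else s(x, x) with hf
  apply Finset.card_le_mul_card_image_of_maps_to (f := f)
  · intro a ha
    rw [Set.mem_toFinset] at ha
    rw [Set.mem_toFinset]
    simp only [hf, dif_pos ha]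
    exact (hM ha).choose_spec.1
  · intro b _
    induction' b with p q
    have hsub : Finset.filter (fun a => f a = s(p, q)) M.verts.toFinset ⊆ {p, q} := by
      intro a ha
      rw [Finset.mem_filter] at ha
      have hmem : a ∈ s(p, q) := by
        rw [← ha.2]
        simp only [hf]
        rw [dif_pos (Set.mem_toFinset.mp ha.1)]
        exact Sym2.mem_mk_left _ _
      simpa using hmem
    calc (Finset.filter (fun a => f a = s(p, q)) M.verts.toFinset).card
        ≤ ({p, q} : Finset V).card := Finset.card_le_card hsub
      _ ≤ 2 := (Finset.card_insert_le _ _).trans (by simp)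

lemma maximal_vert {G : SimpleGraph V} {M : G.Subgraph} (hM : IsMaximalMatching G M)
    {x y : V} (hx : x ∉ M.verts) (hxy : G.Adj x y) : y ∈ M.verts := by
  by_contra hy
  have hdisj : Disjoint M.support (G.subgraphOfAdj hxy).support := by
    rw [hM.1.support_eq_verts, SimpleGraph.support_subgraphOfAdj]
    rw [Set.disjoint_right]
    rintro a (rfl | rfl) <;> simp_all
  have hM' : (M ⊔ G.subgraphOfAdj hxy).IsMatching :=
    hM.1.sup (SimpleGraph.Subgraph.IsMatching.subgraphOfAdj hxy) hdisj
  have hsub : M.edgeSet ⊆ (M ⊔ G.subgraphOfAdj hxy).edgeSet := by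
    rw [SimpleGraph.Subgraph.edgeSet_sup]; exact Set.subset_union_left
  have heq := hM.2 _ hM' hsub
  have : s(x, y) ∈ M.edgeSet := by
    rw [heq, SimpleGraph.Subgraph.edgeSet_sup]
    right; simp
  exact hx (M.edge_vert this)

/-- Let `G` be a finite graph with no isolated vertices satisfying `γ_t(G) = 2 μ*(G)`,
let `M` be a maximal matching of minimum cardinality, and let `v ∈ V(M)` be such that its
partner `w = M_p v` is not a support vertex. Then `w` is the unique neighbor of `v` among
the vertices of `V(M)`. -/
theorem statement18 [Fintype V] (G : SimpleGraph V) (h : NoIsolated G)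
    (heq : gammaT G = 2 * muStar G)
    (M : G.Subgraph) (hM : IsMaximalMatching G M) (hmin : M.edgeSet.ncard = muStar G)
    (v w : V) (hvw : M.Adj v w) (hw : w ∉ supSet G) :
    G.neighborSet v ∩ M.verts = {w} := by
  classical
  have hwv : M.Adj w v := hvw.symm
  have hvM : v ∈ M.verts := M.edge_vert hvw
  have hwM : w ∈ M.verts := M.edge_vert hwv
  ext u
  simp only [Set.mem_inter_iff, SimpleGraph.mem_neighborSet, Set.mem_singleton_iff]
  constructor
  · rintro ⟨hadj, huM⟩
    by_contra hunw
    set S : Set V := M.verts \ {w} with hSdef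
    have hSdom : IsTotalDomSet G S := by
      intro x
      by_cases hx : x ∈ M.verts
      · obtain ⟨x', hx', hux⟩ := hM.1 hx
        by_cases hx'w : x' = w
        · subst hx'w
          obtain ⟨w', hw', huw⟩ := hM.1 hwM
          have hxv : x = v := by rw [huw x hx'.symm, ← huw v hwv]
          exact ⟨u, ⟨huM, hunw⟩, hxv ▸ hadj⟩
        · exact ⟨x', ⟨M.edge_vert hx'.symm, hx'w⟩, hx'.adj_sub⟩
      · have hexists : ∃ y, G.Adj x y ∧ y ≠ w := by
          by_contra hc
          push_neg at hc
          obtain ⟨y, hy⟩ := h x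
          have hyw := hc y hy
          have hxw : G.Adj x w := hyw ▸ hy
          have hnbr : G.neighborSet x = {w} :=
            Set.eq_singleton_iff_unique_mem.mpr ⟨hxw, fun z hz => hc z hz⟩
          exact hw ⟨x, hxw.symm, by rw [hnbr]; exact Set.ncard_singleton w⟩
        obtain ⟨y, hy, hyw⟩ := hexists
        exact ⟨y, ⟨maximal_vert hM hx hy, hyw⟩, hy⟩
    have h1 : gammaT G ≤ S.ncard := Nat.sInf_le ⟨S, hSdom, rfl⟩
    have h2 : S.ncard = M.verts.ncard - 1 := Set.ncard_diff_singleton_of_mem hwM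
    have h3 : M.verts.ncard ≤ 2 * M.edgeSet.ncard := verts_card_le hM.1
    have h4 : 1 ≤ M.edgeSet.ncard := by
      have hmem : s(v, w) ∈ M.edgeSet := SimpleGraph.Subgraph.mem_edgeSet.mpr hvw
      have := (Set.ncard_pos (Set.toFinite _)).mpr ⟨_, hmem⟩
      omega
    omega
  · rintro rfl
    exact ⟨hvw.adj_sub, hwM⟩

end TotalDomMM
end
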